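/- Let u be a biholomorphic automorphism of W = ℍ × ℂ, where ℍ is the upper half-plane. Then the first coordinate of u(w,z) depends only on w; more precisely, u(w,z) = (s(w), t(w,z)) where s(w) = (aw + b)/(cw + d) for some real numbers a, b, c, d with ad − bc > 0, and t : W → ℂ is holomorphic. -/

import Mathlib

open Complex

/-- `W = ℍ × ℂ`, realised as the open subset of `ℂ × ℂ` of pairs whose first coordinate
has positive imaginary part. -/
def W : Set (ℂ × ℂ) := {p | 0 < p.1.im}

open Metric Set


noncomputable def Cay (w : ℂ) : ℂ := (w - I) / (w + I)
noncomputable def CayInv (z : ℂ) : ℂ := I * (1 + z) / (1 - z)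

lemma add_I_ne {w : ℂ} (hw : 0 < w.im) : w + I ≠ 0 := by
  intro h
  have := congrArg Complex.im h
  simp at this
  linarith

lemma cay_mem {w : ℂ} (hw : 0 < w.im) : ‖Cay w‖ < 1 := by
  have h2 : ‖w - I‖ < ‖w + I‖ := by
    have h3 : normSq (w - I) < normSq (w + I) := by
      simp [normSq_apply]; nlinarith
    have := Real.sqrt_lt_sqrt (normSq_nonneg _) h3
    simpa [Complex.norm_def] using this
  rw [Cay, norm_div, div_lt_one]
  · exact h2
  · exact norm_pos_iff.mpr (add_I_ne hw)

lemma one_sub_ne {z : ℂ} (h : ‖z‖ < 1) : 1 - z ≠ 0 := by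
  intro h0
  have : z = 1 := by linear_combination -h0
  simp [this] at h

lemma cayInv_im {z : ℂ} (h : ‖z‖ < 1) : 0 < (CayInv z).im := by
  have hn : 0 < normSq (1 - z) := normSq_pos.mpr (one_sub_ne h)
  have h1 : normSq z < 1 := by
    have := Complex.sq_norm z; nlinarith [norm_nonneg z]
  rw [CayInv, div_im]
  rw [div_sub_div_same]
  apply div_pos _ hn
  simp [normSq_apply] at h1 ⊢
  nlinarith


lemma cayInv_cay {w : ℂ} (hw : 0 < w.im) : CayInv (Cay w) = w := by
  have h1 : w + I ≠ 0 := add_I_ne hw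
  have h2 : 1 - Cay w ≠ 0 := one_sub_ne (cay_mem hw)
  rw [Cay] at h2
  rw [CayInv, Cay]
  field_simp
  ring_nf

lemma cay_cayInv {z : ℂ} (h : ‖z‖ < 1) : Cay (CayInv z) = z := by
  have h1 : 1 - z ≠ 0 := one_sub_ne h
  have h2 : CayInv z + I ≠ 0 := add_I_ne (cayInv_im h)
  rw [CayInv] at h2
  rw [Cay, CayInv]
  field_simp
  ring_nf

lemma cayInv_zero : CayInv 0 = I := by simp [CayInv]
lemma cay_I : Cay I = 0 := by simp [Cay]

lemma diff_cay : DifferentiableOn ℂ Cay {w : ℂ | 0 < w.im} := by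
  apply DifferentiableOn.div
  · exact (differentiable_id.sub_const I).differentiableOn
  · exact (differentiable_id.add_const I).differentiableOn
  · exact fun w hw => add_I_ne hw

lemma diff_cayInv : DifferentiableOn ℂ CayInv (ball (0:ℂ) 1) := by
  apply DifferentiableOn.div
  · exact ((differentiable_const I).mul (differentiable_const 1 |>.add differentiable_id)).differentiableOn
  · exact ((differentiable_const 1).sub differentiable_id).differentiableOn
  · intro z hz
    exact one_sub_ne (by simpa [mem_ball_zero_iff] using hz)

lemma schwarz_eq {f : ℂ → ℂ} (hd : DifferentiableOn ℂ f (ball (0:ℂ) 1))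
    (hm : MapsTo f (ball (0:ℂ) 1) (ball (0:ℂ) 1)) (h0 : f 0 = 0)
    (h1 : ‖deriv f 0‖ = 1) {z : ℂ} (hz : z ∈ ball (0:ℂ) 1) :
    f z = deriv f 0 * z := by
  have hb0 : (0:ℂ) ∈ ball (0:ℂ) 1 := by simp
  have hg : DifferentiableOn ℂ (dslope f 0) (ball (0:ℂ) 1) :=
    (differentiableOn_dslope (ball_mem_nhds _ one_pos)).mpr hd
  have hm' : MapsTo f (ball (0:ℂ) 1) (ball (f 0) 1) := by rwa [h0]
  have hle : ∀ x ∈ ball (0:ℂ) 1, ‖dslope f 0 x‖ ≤ 1 := fun x hx => by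
    simpa using Complex.norm_dslope_le_div_of_mapsTo_ball hd (hm'.mono_right ball_subset_closedBall) hx
  have hmax : IsMaxOn (norm ∘ dslope f 0) (ball (0:ℂ) 1) 0 := by
    intro x hx
    simp only [Function.comp_apply, dslope_same, Set.mem_setOf_eq]
    calc ‖dslope f 0 x‖ ≤ 1 := hle x hx
      _ = ‖deriv f 0‖ := by rw [h1]
  have heq := Complex.eqOn_of_isPreconnected_of_isMaxOn_norm
    (convex_ball (0:ℂ) 1).isPreconnected isOpen_ball hg hb0 hmax
  have hzeq : dslope f 0 z = deriv f 0 := by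
    have := heq hz
    simpa [dslope_same] using this
  rcases eq_or_ne z 0 with rfl | hne
  · simp [h0]
  · rw [dslope_of_ne _ hne, slope_def_field] at hzeq
    field_simp [h0] at hzeq
    linear_combination hzeq + h0
lemma halfplane_fixed {t t' : ℂ → ℂ}
    (ht : DifferentiableOn ℂ t {w : ℂ | 0 < w.im})
    (ht' : DifferentiableOn ℂ t' {w : ℂ | 0 < w.im})
    (hmt : MapsTo t {w : ℂ | 0 < w.im} {w : ℂ | 0 < w.im})
    (hmt' : MapsTo t' {w : ℂ | 0 < w.im} {w : ℂ | 0 < w.im})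
    (hti : t I = I)
    (hinv : ∀ w : ℂ, 0 < w.im → t' (t w) = w)
    (hinv' : ∀ w : ℂ, 0 < w.im → t (t' w) = w) :
    ∃ μ : ℂ, ‖μ‖ = 1 ∧ ∀ w : ℂ, 0 < w.im → Cay (t w) = μ * Cay w := by
  have hIim : (0:ℝ) < Complex.I.im := by simp
  set H : Set ℂ := {w : ℂ | 0 < w.im} with hH
  have hCIm : MapsTo CayInv (ball (0:ℂ) 1) H := fun z hz =>
    cayInv_im (by simpa [mem_ball_zero_iff] using hz)
  have hCm : MapsTo Cay H (ball (0:ℂ) 1) := fun w hw => by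
    simpa [mem_ball_zero_iff] using cay_mem hw
  set F : ℂ → ℂ := fun z => Cay (t (CayInv z)) with hF
  set G : ℂ → ℂ := fun z => Cay (t' (CayInv z)) with hG
  have hFd : DifferentiableOn ℂ F (ball (0:ℂ) 1) :=
    (diff_cay.comp (ht.comp diff_cayInv hCIm) (hmt.comp hCIm))
  have hGd : DifferentiableOn ℂ G (ball (0:ℂ) 1) :=
    (diff_cay.comp (ht'.comp diff_cayInv hCIm) (hmt'.comp hCIm))
  have hFm : MapsTo F (ball (0:ℂ) 1) (ball (0:ℂ) 1) := fun z hz =>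
    hCm (hmt (hCIm hz))
  have hGm : MapsTo G (ball (0:ℂ) 1) (ball (0:ℂ) 1) := fun z hz =>
    hCm (hmt' (hCIm hz))
  have ht'i : t' I = I := by
    have := hinv I hIim
    rwa [hti] at this
  have hF0 : F 0 = 0 := by rw [hF]; simp only [cayInv_zero, hti, cay_I]
  have hG0 : G 0 = 0 := by rw [hG]; simp only [cayInv_zero, ht'i, cay_I]
  have hb0 : (0:ℂ) ∈ ball (0:ℂ) 1 := by simp
  have hGF : ∀ z ∈ ball (0:ℂ) 1, G (F z) = z := by
    intro z hz
    have h1 : 0 < (t (CayInv z)).im := hmt (hCIm hz)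
    have : CayInv (Cay (t (CayInv z))) = t (CayInv z) := cayInv_cay h1
    rw [hG, hF]
    simp only [this, hinv _ (hCIm hz)]
    exact cay_cayInv (by simpa [mem_ball_zero_iff] using hz)
  have hFda : DifferentiableAt ℂ F 0 := hFd.differentiableAt (isOpen_ball.mem_nhds hb0)
  have hGda : DifferentiableAt ℂ G 0 := by
    have := hGd.differentiableAt (isOpen_ball.mem_nhds (hFm hb0))
    rwa [hF0] at this
  have hderiv : deriv G 0 * deriv F 0 = 1 := by
    have hcomp : deriv (G ∘ F) 0 = deriv G (F 0) * deriv F 0 := deriv_comp 0 (by rwa [hF0]) hFda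
    have hid : G ∘ F =ᶠ[nhds (0:ℂ)] id := by
      filter_upwards [isOpen_ball.mem_nhds hb0] with z hz
      exact hGF z hz
    rw [hF0] at hcomp
    rw [← hcomp, hid.deriv_eq, deriv_id]
  have hFle : ‖deriv F 0‖ ≤ 1 :=
    Complex.norm_deriv_le_one_of_mapsTo_ball hFd (by rw [hF0]; exact hFm.mono_right ball_subset_closedBall) one_pos
  have hGle : ‖deriv G 0‖ ≤ 1 :=
    Complex.norm_deriv_le_one_of_mapsTo_ball hGd (by rw [hG0]; exact hGm.mono_right ball_subset_closedBall) one_pos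
  have habs : ‖deriv F 0‖ = 1 := by
    have := congrArg norm hderiv
    rw [norm_mul, norm_one] at this
    nlinarith [norm_nonneg (deriv F 0), norm_nonneg (deriv G 0)]
  refine ⟨deriv F 0, habs, fun w hw => ?_⟩
  have hcw : Cay w ∈ ball (0:ℂ) 1 := hCm hw
  have := schwarz_eq hFd hFm hF0 habs hcw
  rw [hF] at this
  simp only [cayInv_cay hw] at this
  rw [this]

lemma W_open : IsOpen W :=
  (Complex.continuous_im.comp continuous_fst).isOpen_preimage (Set.Ioi 0) isOpen_Ioi

lemma H_open : IsOpen {w : ℂ | 0 < w.im} :=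
  Complex.continuous_im.isOpen_preimage (Set.Ioi 0) isOpen_Ioi

lemma first_coord_const {u : ℂ × ℂ → ℂ × ℂ} (hu : DifferentiableOn ℂ u W)
    (humaps : Set.MapsTo u W W) {w : ℂ} (hw : 0 < w.im) (z : ℂ) :
    (u (w, z)).1 = (u (w, 0)).1 := by
  set f : ℂ → ℂ := fun z => (u (w, z)).1 with hf
  have hmem : ∀ z : ℂ, ((w, z) : ℂ × ℂ) ∈ W := fun z => hw
  have hfd : Differentiable ℂ f := by
    intro z
    have h1 : DifferentiableAt ℂ u (w, z) :=
      (hu _ (hmem z)).differentiableAt (W_open.mem_nhds (hmem z))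
    exact (h1.fst).comp z ((differentiableAt_const w).prodMk differentiableAt_id)
  have hfim : ∀ z, 0 < (f z).im := fun z => humaps (hmem z)
  have hg : Differentiable ℂ fun z => Cay (f z) := by
    intro z
    exact ((diff_cay _ (hfim z)).differentiableAt (H_open.mem_nhds (hfim z))).comp z (hfd z)
  have hbdd : Bornology.IsBounded (Set.range fun z => Cay (f z)) := by
    apply (Metric.isBounded_ball (x := (0:ℂ)) (r := 1)).subset
    rintro q ⟨z, rfl⟩
    simpa [mem_ball_zero_iff] using cay_mem (hfim z)
  have hc : Cay (f z) = Cay (f 0) := hg.apply_eq_apply_of_bounded hbdd z 0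
  have := congrArg CayInv hc
  rwa [cayInv_cay (hfim z), cayInv_cay (hfim 0)] at this


/-- Every biholomorphic automorphism `u` of `W = ℍ × ℂ` has the form
`u(w,z) = (s(w), t(w,z))` where `s(w) = (aw+b)/(cw+d)` with `a, b, c, d` real and
`ad - bc > 0`, and `t` (the second coordinate of `u`) is holomorphic. -/
theorem automorphism_of_upperHalfPlane_prod_plane
    (u v : ℂ × ℂ → ℂ × ℂ)
    (hu : DifferentiableOn ℂ u W) (hv : DifferentiableOn ℂ v W)
    (humaps : Set.MapsTo u W W) (hvmaps : Set.MapsTo v W W)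
    (hvu : ∀ p ∈ W, v (u p) = p) (huv : ∀ p ∈ W, u (v p) = p) :
    (∃ a b c d : ℝ, a * d - b * c > 0 ∧
      ∀ p ∈ W, (u p).1 = ((a : ℂ) * p.1 + (b : ℂ)) / ((c : ℂ) * p.1 + (d : ℂ))) ∧
    DifferentiableOn ℂ (fun p => (u p).2) W := by
  refine ⟨?_, hu.snd⟩
  set s : ℂ → ℂ := fun w => (u (w, 0)).1 with hsdef
  set s' : ℂ → ℂ := fun w => (v (w, 0)).1 with hs'def
  have hWmem : ∀ w : ℂ, 0 < w.im → ((w, (0:ℂ)) : ℂ × ℂ) ∈ W := fun w hw => hw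
  have hus : ∀ p ∈ W, (u p).1 = s p.1 := by
    intro p hp
    have : (u (p.1, p.2)).1 = (u (p.1, 0)).1 := first_coord_const hu humaps hp p.2
    simpa using this
  have hvs : ∀ p ∈ W, (v p).1 = s' p.1 := by
    intro p hp
    have : (v (p.1, p.2)).1 = (v (p.1, 0)).1 := first_coord_const hv hvmaps hp p.2
    simpa using this
  have hsim : ∀ w : ℂ, 0 < w.im → 0 < (s w).im := fun w hw => humaps (hWmem w hw)
  have hs'im : ∀ w : ℂ, 0 < w.im → 0 < (s' w).im := fun w hw => hvmaps (hWmem w hw)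
  have hs's : ∀ w : ℂ, 0 < w.im → s' (s w) = w := by
    intro w hw
    have h1 : v (u (w, 0)) = (w, 0) := hvu _ (hWmem w hw)
    have h2 : (v (u (w, 0))).1 = s' (u (w, 0)).1 := hvs _ (humaps (hWmem w hw))
    have h3 : (v (u (w, 0))).1 = w := by rw [h1]
    rw [h2] at h3
    exact h3
  have hss' : ∀ w : ℂ, 0 < w.im → s (s' w) = w := by
    intro w hw
    have h1 : u (v (w, 0)) = (w, 0) := huv _ (hWmem w hw)
    have h2 : (u (v (w, 0))).1 = s (v (w, 0)).1 := hus _ (hvmaps (hWmem w hw))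
    have h3 : (u (v (w, 0))).1 = w := by rw [h1]
    rw [h2] at h3
    exact h3
  have hsd : DifferentiableOn ℂ s {w : ℂ | 0 < w.im} := by
    intro w hw
    have h1 : DifferentiableAt ℂ u (w, 0) :=
      (hu _ (hWmem w hw)).differentiableAt (W_open.mem_nhds (hWmem w hw))
    exact ((h1.fst).comp (f := fun w : ℂ => ((w, (0:ℂ)) : ℂ × ℂ)) w (differentiableAt_id.prodMk (differentiableAt_const (0:ℂ)))).differentiableWithinAt
  have hs'd : DifferentiableOn ℂ s' {w : ℂ | 0 < w.im} := by
    intro w hw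
    have h1 : DifferentiableAt ℂ v (w, 0) :=
      (hv _ (hWmem w hw)).differentiableAt (W_open.mem_nhds (hWmem w hw))
    exact ((h1.fst).comp (f := fun w : ℂ => ((w, (0:ℂ)) : ℂ × ℂ)) w (differentiableAt_id.prodMk (differentiableAt_const (0:ℂ)))).differentiableWithinAt
  have hIim : (0:ℝ) < Complex.I.im := by simp
  set x : ℝ := (s I).re with hxdef
  set y : ℝ := (s I).im with hydef
  have hy : 0 < y := hsim I hIim
  have hyne : (y:ℂ) ≠ 0 := by exact_mod_cast hy.ne'
  have hsI : s I = (x:ℂ) + (y:ℂ) * I := by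
    apply Complex.ext <;> simp [hxdef, hydef]
  set t : ℂ → ℂ := fun w => (s w - (x:ℂ)) / (y:ℂ) with htdef
  set t' : ℂ → ℂ := fun w => s' ((y:ℂ) * w + (x:ℂ)) with ht'def
  have htw : ∀ w, t w = (s w - (x:ℂ)) / (y:ℂ) := fun w => rfl
  have ht'w : ∀ w, t' w = s' ((y:ℂ) * w + (x:ℂ)) := fun w => rfl
  have htim : ∀ w : ℂ, 0 < w.im → 0 < (t w).im := by
    intro w hw
    have h1 := hsim w hw
    have h2 : (t w).im = (s w).im / y := by
      rw [htw, Complex.div_im]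
      simp [Complex.normSq_apply]
      field_simp
    rw [h2]
    positivity
  have haffim : ∀ w : ℂ, 0 < w.im → 0 < ((y:ℂ) * w + (x:ℂ)).im := by
    intro w hw
    simp only [Complex.add_im, Complex.mul_im, Complex.ofReal_re, Complex.ofReal_im]
    nlinarith
  have ht'im : ∀ w : ℂ, 0 < w.im → 0 < (t' w).im := fun w hw => hs'im _ (haffim w hw)
  have hsmul : ∀ w : ℂ, (y:ℂ) * ((s w - (x:ℂ)) / (y:ℂ)) + (x:ℂ) = s w := by
    intro w; field_simp; ring
  have ht't : ∀ w : ℂ, 0 < w.im → t' (t w) = w := by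
    intro w hw
    rw [ht'w, htw, hsmul]
    exact hs's w hw
  have htt' : ∀ w : ℂ, 0 < w.im → t (t' w) = w := by
    intro w hw
    rw [htw, ht'w, hss' _ (haffim w hw)]
    field_simp
    ring
  have htI : t I = I := by
    rw [htw, hsI]
    field_simp
    ring
  have htd : DifferentiableOn ℂ t {w : ℂ | 0 < w.im} :=
    (hsd.sub_const _).div_const _
  have ht'd : DifferentiableOn ℂ t' {w : ℂ | 0 < w.im} := by
    apply hs'd.comp
    · exact ((differentiable_id.const_mul _).add_const _).differentiableOn
    · exact fun w hw => haffim w hw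
  obtain ⟨μ, hμabs, hμ⟩ := halfplane_fixed htd ht'd (fun w hw => htim w hw)
    (fun w hw => ht'im w hw) htI ht't htt'
  have key : ∀ w : ℂ, 0 < w.im → (t w - I) * (w + I) = μ * ((w - I) * (t w + I)) := by
    intro w hw
    have h1 := hμ w hw
    rw [Cay, Cay] at h1
    have h2 : w + I ≠ 0 := add_I_ne hw
    have h3 : t w + I ≠ 0 := add_I_ne (htim w hw)
    field_simp at h1
    linear_combination h1
  by_cases hμ1 : μ = -1
  · refine ⟨x, -y, 1, 0, by nlinarith, ?_⟩
    intro p hp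
    have hw : 0 < p.1.im := hp
    have hwne : p.1 ≠ 0 := by
      intro h
      rw [h] at hw
      simp at hw
    have hk := key p.1 hw
    rw [hμ1] at hk
    have htmul : t p.1 * p.1 = -1 := by
      linear_combination hk / 2 + Complex.I_sq
    rw [hus p hp]
    have hsw : s p.1 = (y:ℂ) * t p.1 + (x:ℂ) := by
      rw [htw]; field_simp; ring
    rw [hsw]
    push_cast
    rw [eq_div_iff (by simpa using hwne)]
    linear_combination (y:ℂ) * htmul
  · have hμne : 1 + μ ≠ 0 := fun h => hμ1 (by linear_combination h)
    have hμ0 : μ ≠ 0 := by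
      intro h
      rw [h] at hμabs
      simp at hμabs
    have hconj : (starRingEnd ℂ) μ = μ⁻¹ := by
      apply eq_inv_of_mul_eq_one_left
      rw [mul_comm, Complex.mul_conj, Complex.normSq_eq_norm_sq, hμabs]
      norm_num
    set R : ℂ := I * (1 - μ) / (1 + μ) with hRdef
    have hRconj : (starRingEnd ℂ) R = R := by
      rw [hRdef, map_div₀, map_mul, map_sub, map_add, map_one, Complex.conj_I, hconj]
      have h1 : 1 + μ⁻¹ ≠ 0 := by
        intro h
        apply hμne
        have : μ * (1 + μ⁻¹) = μ * 0 := by rw [h]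
        rw [mul_add, mul_inv_cancel₀ hμ0, mul_zero] at this
        linear_combination this
      rw [div_eq_div_iff h1 hμne]
      field_simp
      ring
    have hRim : R.im = 0 := Complex.conj_eq_iff_im.mp hRconj
    set r : ℝ := R.re with hrdef
    have hrR : (r:ℂ) = R := by
      apply Complex.ext
      · simp [hrdef]
      · simp [hRim]
    have hrμ : (r:ℂ) * (1 + μ) = I * (1 - μ) := by
      rw [hrR, hRdef]
      field_simp
    refine ⟨y - x * r, y * r + x, -r, 1, by nlinarith [sq_nonneg r], ?_⟩
    intro p hp
    have hw : 0 < p.1.im := hp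
    set w : ℂ := p.1 with hwdef
    have hden : ((-r : ℝ) : ℂ) * w + ((1:ℝ) : ℂ) ≠ 0 := by
      intro h
      have him : (-r) * w.im = 0 := by
        have h0 := congrArg Complex.im h
        simp only [Complex.add_im, Complex.mul_im, Complex.ofReal_re, Complex.ofReal_im,
          Complex.one_im, Complex.zero_im, zero_mul, add_zero, mul_zero, zero_add] at h0
        linarith
      have hr0 : r = 0 := by
        rcases mul_eq_zero.mp him with h' | h'
        · linarith
        · linarith
      rw [hr0] at h
      simp at h
    have hk := key w hw
    have hD : (w + I) - μ * (w - I) ≠ 0 := by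
      have h2 : w + I ≠ 0 := add_I_ne hw
      have h4 : 1 - μ * Cay w ≠ 0 := by
        apply one_sub_ne
        rw [norm_mul, hμabs, one_mul]
        exact cay_mem hw
      have heq : (w + I) - μ * (w - I) = (w + I) * (1 - μ * Cay w) := by
        rw [Cay]
        field_simp
      rw [heq]
      exact mul_ne_zero h2 h4
    have ht1 : t w * ((w + I) - μ * (w - I)) = I * ((w + I) + μ * (w - I)) := by
      linear_combination hk
    have h5 : t w * (1 - (r:ℂ) * w) * ((w + I) - μ * (w - I))
        = (w + (r:ℂ)) * ((w + I) - μ * (w - I)) := by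
      linear_combination (1 - (r:ℂ) * w) * ht1 - (1 + w^2) * I * hrμ
        + (μ - 1) * w * ((r:ℂ) + w) * Complex.I_sq
    have ht2 : t w * (1 - (r:ℂ) * w) = w + (r:ℂ) := mul_right_cancel₀ hD h5
    rw [hus p hp]
    have hsw : s w = (y:ℂ) * t w + (x:ℂ) := by
      rw [htw]; field_simp; ring
    rw [hsw]
    push_cast
    rw [eq_div_iff (by push_cast at hden ⊢; exact hden)]
    linear_combination (y:ℂ) * ht2
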